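/- For H(w) = diag(1/√(w_i² + 4α⁴)) on ℝ^d with α > 0, the potential ψ_α(w) = Σ_i [w_i·arcsinh(w_i/(2α²)) − √(w_i² + 4α⁴)] satisfies ∇²ψ_α(w) = H(w) for all w ∈ ℝ^d. -/

import Mathlib

open Set

section aux

variable (α : ℝ)

lemma aux_sqrt_pos (hα : 0 < α) (t : ℝ) : 0 < Real.sqrt (t ^ 2 + 4 * α ^ 4) := by
  apply Real.sqrt_pos.mpr
  positivity

lemma aux_sqrt_one (hα : 0 < α) (t : ℝ) :
    Real.sqrt (1 + (t / (2 * α ^ 2)) ^ 2) = Real.sqrt (t ^ 2 + 4 * α ^ 4) / (2 * α ^ 2) := by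
  have h2 : (0:ℝ) < 2 * α ^ 2 := by positivity
  have h : 1 + (t / (2 * α ^ 2)) ^ 2 = (t ^ 2 + 4 * α ^ 4) / (2 * α ^ 2) ^ 2 := by
    field_simp; ring
  rw [h, Real.sqrt_div (by positivity), Real.sqrt_sq h2.le]

lemma aux_derivB (hα : 0 < α) (t : ℝ) :
    HasDerivAt (fun s : ℝ => Real.arsinh (s / (2 * α ^ 2)))
      (1 / Real.sqrt (t ^ 2 + 4 * α ^ 4)) t := by
  have h2 : (0:ℝ) < 2 * α ^ 2 := by positivity
  have h1 := (hasDerivAt_id t).div_const (2 * α ^ 2)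
  have h := (Real.hasDerivAt_arsinh (t / (2 * α ^ 2))).comp t h1
  refine h.congr_deriv ?_
  rw [aux_sqrt_one α hα t]
  have hs := aux_sqrt_pos α hα t
  field_simp

lemma aux_derivA (hα : 0 < α) (t : ℝ) :
    HasDerivAt (fun s : ℝ => s * Real.arsinh (s / (2 * α ^ 2))
        - Real.sqrt (s ^ 2 + 4 * α ^ 4))
      (Real.arsinh (t / (2 * α ^ 2))) t := by
  have hs := aux_sqrt_pos α hα t
  have h3 : HasDerivAt (fun s : ℝ => s * Real.arsinh (s / (2 * α ^ 2)))
      (1 * Real.arsinh (t / (2 * α ^ 2)) + t * (1 / Real.sqrt (t ^ 2 + 4 * α ^ 4))) t :=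
    (hasDerivAt_id t).mul (aux_derivB α hα t)
  have h4 : HasDerivAt (fun s : ℝ => s ^ 2 + 4 * α ^ 4) (2 * t) t := by
    simpa using ((hasDerivAt_pow 2 t).add_const (4 * α ^ 4))
  have h5 := (Real.hasDerivAt_sqrt (by positivity : t ^ 2 + 4 * α ^ 4 ≠ 0)).comp t h4
  refine (h3.sub h5).congr_deriv ?_
  field_simp
  ring

end aux

/-- The potential `ψ_α(w) = Σ_i w_i·arcsinh(w_i/(2α²)) − √(w_i² + 4α⁴)` has
Hessian `∇²ψ_α(w) = diag(1/√(w_i² + 4α⁴))`. -/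
theorem stmt14 {d : ℕ} (α : ℝ) (hα : 0 < α) :
    ∀ (w : EuclideanSpace ℝ (Fin d)) (i j : Fin d),
      fderiv ℝ
        (fun x : EuclideanSpace ℝ (Fin d) =>
          fderiv ℝ
            (fun y : EuclideanSpace ℝ (Fin d) =>
              ∑ k : Fin d, (y k * Real.arsinh (y k / (2 * α ^ 2))
                - Real.sqrt ((y k) ^ 2 + 4 * α ^ 4)))
            x (EuclideanSpace.single j 1))
        w (EuclideanSpace.single i 1) =
      if i = j then 1 / Real.sqrt ((w i) ^ 2 + 4 * α ^ 4) else 0 := by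
  intro w i j
  let E := EuclideanSpace ℝ (Fin d)
  have hproj : ∀ (k : Fin d) (v : E), (EuclideanSpace.proj k : E →L[ℝ] ℝ) v = v k := fun _ _ => rfl
  -- inner fderiv
  have hinner : ∀ x : E,
      fderiv ℝ (fun y : E =>
          ∑ k : Fin d, (y k * Real.arsinh (y k / (2 * α ^ 2))
            - Real.sqrt ((y k) ^ 2 + 4 * α ^ 4))) x (EuclideanSpace.single j 1)
        = Real.arsinh (x j / (2 * α ^ 2)) := by
    intro x
    have hF : HasFDerivAt (fun y : E =>
        ∑ k : Fin d, (y k * Real.arsinh (y k / (2 * α ^ 2))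
          - Real.sqrt ((y k) ^ 2 + 4 * α ^ 4)))
        (∑ k : Fin d, Real.arsinh (x k / (2 * α ^ 2)) •
          (EuclideanSpace.proj k : E →L[ℝ] ℝ)) x := by
      apply HasFDerivAt.fun_sum
      intro k _
      have := (aux_derivA α hα (x k)).comp_hasFDerivAt x
        (EuclideanSpace.proj k : E →L[ℝ] ℝ).hasFDerivAt
      exact this
    rw [hF.fderiv]
    simp only [ContinuousLinearMap.sum_apply, ContinuousLinearMap.smul_apply,
      hproj, EuclideanSpace.single_apply, smul_eq_mul]
    rw [Finset.sum_eq_single j]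
    · simp
    · intro k _ hk
      rw [if_neg hk, mul_zero]
    · simp
  -- outer fderiv
  have houter : HasFDerivAt (fun x : E => Real.arsinh (x j / (2 * α ^ 2)))
      ((1 / Real.sqrt ((w j) ^ 2 + 4 * α ^ 4)) •
        (EuclideanSpace.proj j : E →L[ℝ] ℝ)) w := by
    have := (aux_derivB α hα (w j)).comp_hasFDerivAt w
      (EuclideanSpace.proj j : E →L[ℝ] ℝ).hasFDerivAt
    exact this
  have : (fun x : E =>
      fderiv ℝ (fun y : E =>
          ∑ k : Fin d, (y k * Real.arsinh (y k / (2 * α ^ 2))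
            - Real.sqrt ((y k) ^ 2 + 4 * α ^ 4))) x (EuclideanSpace.single j 1))
      = fun x : E => Real.arsinh (x j / (2 * α ^ 2)) := funext hinner
  rw [this, houter.fderiv]
  simp only [ContinuousLinearMap.smul_apply, hproj,
    EuclideanSpace.single_apply, smul_eq_mul]
  by_cases h : i = j
  · subst h; simp
  · simp [EuclideanSpace.single_apply, h, Ne.symm h]
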